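/- Let (V₁, ⟨·,·⟩_h, V₂, B) be a step-two Carnot datum with dim V₁ = m. Then δ = 0 if and only if the datum is nascent H-type, i.e., there exists an inner product g on V₂ such that (J^g_T)² = −‖T‖_g²·id on V₁ for every T ∈ V₂. -/

import Mathlib

open scoped RealInnerProductSpace

noncomputable section

variable {V₁ : Type*} [NormedAddCommGroup V₁] [InnerProductSpace ℝ V₁] [FiniteDimensional ℝ V₁]
variable {V₂ : Type*} [AddCommGroup V₂] [Module ℝ V₂] [FiniteDimensional ℝ V₂]

/-- `g` is an inner product (symmetric positive-definite bilinear form) on `V₂`. -/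
structure IsInnerProd (g : V₂ →ₗ[ℝ] V₂ →ₗ[ℝ] ℝ) : Prop where
  symm : ∀ s t : V₂, g s t = g t s
  posdef : ∀ t : V₂, t ≠ 0 → 0 < g t t

/-- The norm `‖t‖_g = √(g t t)` associated to a vertical inner product `g`. -/
def gnorm (g : V₂ →ₗ[ℝ] V₂ →ₗ[ℝ] ℝ) (t : V₂) : ℝ := Real.sqrt (g t t)

/-- The Hilbert–Schmidt norm `‖F‖_HS = √(trace(F* F))` of an endomorphism of the
inner product space `V₁`. -/
def hsNorm (F : V₁ →ₗ[ℝ] V₁) : ℝ :=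
  Real.sqrt (LinearMap.trace ℝ V₁ (LinearMap.adjoint F ∘ₗ F))

/-- `J` is the J-operator of the bracket `B` with respect to the vertical inner product `g`:
`⟨J_T U, V⟩_h = g(B(U,V), T)` for all `U V : V₁`, `T : V₂`. -/
def IsJOp (B : V₁ →ₗ[ℝ] V₁ →ₗ[ℝ] V₂) (g : V₂ →ₗ[ℝ] V₂ →ₗ[ℝ] ℝ)
    (J : V₂ → V₁ →ₗ[ℝ] V₁) : Prop :=
  ∀ (T : V₂) (U V : V₁), ⟪J T U, V⟫ = g (B U V) T

/-- The H-type deviation relative to a fixed vertical inner product `g` with J-operator `J`: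
`δ(g) = (dim V₁)^{-1/2} sup { ‖(J_T)² + id‖_HS : ‖T‖_g = 1 }`. -/
def deltaOf (g : V₂ →ₗ[ℝ] V₂ →ₗ[ℝ] ℝ) (J : V₂ → V₁ →ₗ[ℝ] V₁) : ℝ :=
  (Real.sqrt (Module.finrank ℝ V₁))⁻¹ *
    sSup ((fun T => hsNorm (J T ∘ₗ J T + LinearMap.id)) '' {T : V₂ | gnorm g T = 1})

/-- The H-type deviation of a step-two Carnot datum: the infimum of `δ(g)` over all vertical
inner products `g` on `V₂`. -/
def htypeDeviation (B : V₁ →ₗ[ℝ] V₁ →ₗ[ℝ] V₂) : ℝ :=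
  sInf { d : ℝ | ∃ (g : V₂ →ₗ[ℝ] V₂ →ₗ[ℝ] ℝ) (J : V₂ → V₁ →ₗ[ℝ] V₁),
    IsInnerProd g ∧ IsJOp B g J ∧ d = deltaOf g J }

end

noncomputable section
namespace HTypeAux

variable {V₁ : Type*} [NormedAddCommGroup V₁] [InnerProductSpace ℝ V₁] [FiniteDimensional ℝ V₁]

lemma trace_eq_sum_inner' {ι : Type*} [Fintype ι] [DecidableEq ι]
    (b : OrthonormalBasis ι ℝ V₁) (F : V₁ →ₗ[ℝ] V₁) :
    LinearMap.trace ℝ V₁ F = ∑ i, ⟪b i, F (b i)⟫ := by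
  rw [LinearMap.trace_eq_matrix_trace ℝ b.toBasis, Matrix.trace]
  simp [Matrix.diag, LinearMap.toMatrix_apply, OrthonormalBasis.coe_toBasis,
    OrthonormalBasis.coe_toBasis_repr_apply, OrthonormalBasis.repr_apply_apply]

lemma traceAdj (F : V₁ →ₗ[ℝ] V₁) :
    LinearMap.trace ℝ V₁ (LinearMap.adjoint F ∘ₗ F) =
      ∑ i, ‖F (stdOrthonormalBasis ℝ V₁ i)‖ ^ 2 := by
  rw [trace_eq_sum_inner' (stdOrthonormalBasis ℝ V₁)]
  congr 1
  funext i
  rw [LinearMap.comp_apply, LinearMap.adjoint_inner_right, real_inner_self_eq_norm_sq]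

end HTypeAux

noncomputable section HS
namespace HTypeAux
set_option linter.unusedSectionVars false

variable {V₁ : Type*} [NormedAddCommGroup V₁] [InnerProductSpace ℝ V₁] [FiniteDimensional ℝ V₁]

/-- The map sending an endomorphism to the tuple of values on the standard orthonormal basis,
viewed in `PiLp 2`. -/
def toPiL : (V₁ →ₗ[ℝ] V₁) →ₗ[ℝ]
    PiLp 2 (fun _ : Fin (Module.finrank ℝ V₁) => V₁) where
  toFun F := (WithLp.equiv 2 _).symm fun i => F (stdOrthonormalBasis ℝ V₁ i)
  map_add' F G := rfl
  map_smul' c F := rfl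

lemma hsNorm_eq (F : V₁ →ₗ[ℝ] V₁) : hsNorm F = ‖toPiL F‖ := by
  rw [hsNorm, traceAdj, PiLp.norm_eq_of_L2]
  rfl

lemma hsNorm_nonneg (F : V₁ →ₗ[ℝ] V₁) : 0 ≤ hsNorm F := Real.sqrt_nonneg _

lemma hsNorm_zero : hsNorm (0 : V₁ →ₗ[ℝ] V₁) = 0 := by
  rw [hsNorm_eq, map_zero, norm_zero]

lemma hsNorm_eq_zero {F : V₁ →ₗ[ℝ] V₁} (h : hsNorm F = 0) : F = 0 := by
  rw [hsNorm_eq, norm_eq_zero] at h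
  apply (stdOrthonormalBasis ℝ V₁).toBasis.ext
  intro i
  have := congrFun (congrArg (WithLp.equiv 2 _) h) i
  simpa [toPiL, OrthonormalBasis.coe_toBasis] using this

lemma hsNorm_add_le (F G : V₁ →ₗ[ℝ] V₁) :
    hsNorm (F + G) ≤ hsNorm F + hsNorm G := by
  rw [hsNorm_eq, hsNorm_eq, hsNorm_eq, map_add]
  exact norm_add_le _ _

lemma hsNorm_smul (c : ℝ) (F : V₁ →ₗ[ℝ] V₁) :
    hsNorm (c • F) = |c| * hsNorm F := by
  rw [hsNorm_eq, hsNorm_eq, map_smul, norm_smul, Real.norm_eq_abs]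

lemma hsNorm_sum_le {ι : Type*} (s : Finset ι) (f : ι → V₁ →ₗ[ℝ] V₁) :
    hsNorm (∑ i ∈ s, f i) ≤ ∑ i ∈ s, hsNorm (f i) := by
  rw [hsNorm_eq, map_sum]
  refine (norm_sum_le _ _).trans ?_
  exact Finset.sum_le_sum fun i _ => by rw [hsNorm_eq]

lemma sq_hsNorm (F : V₁ →ₗ[ℝ] V₁) :
    hsNorm F ^ 2 = LinearMap.trace ℝ V₁ (LinearMap.adjoint F ∘ₗ F) := by
  rw [hsNorm, Real.sq_sqrt]
  rw [traceAdj]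
  positivity

lemma adjoint_id' : LinearMap.adjoint (LinearMap.id : V₁ →ₗ[ℝ] V₁) = LinearMap.id := by
  symm
  rw [LinearMap.eq_adjoint_iff]
  intro x y
  simp

lemma hsNorm_id : hsNorm (LinearMap.id : V₁ →ₗ[ℝ] V₁) =
    Real.sqrt (Module.finrank ℝ V₁) := by
  rw [hsNorm, adjoint_id', LinearMap.id_comp, LinearMap.trace_id]

lemma abs_trace_le (F : V₁ →ₗ[ℝ] V₁) :
    |LinearMap.trace ℝ V₁ F| ≤ Real.sqrt (Module.finrank ℝ V₁) * hsNorm F := by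
  have h1 : (LinearMap.trace ℝ V₁ F) ^ 2 ≤
      (Module.finrank ℝ V₁ : ℝ) * (hsNorm F ^ 2) := by
    rw [trace_eq_sum_inner' (stdOrthonormalBasis ℝ V₁), sq_hsNorm, traceAdj]
    calc (∑ i, ⟪stdOrthonormalBasis ℝ V₁ i, F (stdOrthonormalBasis ℝ V₁ i)⟫) ^ 2
        ≤ (Finset.univ.card : ℝ) *
          ∑ i, ⟪stdOrthonormalBasis ℝ V₁ i, F (stdOrthonormalBasis ℝ V₁ i)⟫ ^ 2 := by
          have := sq_sum_le_card_mul_sum_sq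
            (s := (Finset.univ : Finset (Fin (Module.finrank ℝ V₁))))
            (f := fun i => ⟪stdOrthonormalBasis ℝ V₁ i, F (stdOrthonormalBasis ℝ V₁ i)⟫)
          exact_mod_cast this
      _ ≤ (Module.finrank ℝ V₁ : ℝ) * ∑ i, ‖F (stdOrthonormalBasis ℝ V₁ i)‖ ^ 2 := by
          rw [Finset.card_univ, Fintype.card_fin]
          refine mul_le_mul_of_nonneg_left (Finset.sum_le_sum fun i _ => ?_) (by positivity)
          have hb : ‖stdOrthonormalBasis ℝ V₁ i‖ = 1 :=
            (stdOrthonormalBasis ℝ V₁).orthonormal.1 i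
          have := abs_real_inner_le_norm (stdOrthonormalBasis ℝ V₁ i)
            (F (stdOrthonormalBasis ℝ V₁ i))
          rw [hb, one_mul] at this
          calc ⟪stdOrthonormalBasis ℝ V₁ i, F (stdOrthonormalBasis ℝ V₁ i)⟫ ^ 2
              = |⟪stdOrthonormalBasis ℝ V₁ i, F (stdOrthonormalBasis ℝ V₁ i)⟫| ^ 2 := by
                rw [sq_abs]
            _ ≤ ‖F (stdOrthonormalBasis ℝ V₁ i)‖ ^ 2 := by
                exact pow_le_pow_left₀ (abs_nonneg _) this 2
  calc |LinearMap.trace ℝ V₁ F| = Real.sqrt ((LinearMap.trace ℝ V₁ F) ^ 2) := by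
        rw [Real.sqrt_sq_eq_abs]
    _ ≤ Real.sqrt ((Module.finrank ℝ V₁ : ℝ) * (hsNorm F ^ 2)) := Real.sqrt_le_sqrt h1
    _ = Real.sqrt (Module.finrank ℝ V₁) * hsNorm F := by
        rw [Real.sqrt_mul (by positivity), Real.sqrt_sq (hsNorm_nonneg F)]

lemma trace_comp_self_of_skew {F : V₁ →ₗ[ℝ] V₁} (h : LinearMap.adjoint F = -F) :
    LinearMap.trace ℝ V₁ (F ∘ₗ F) = -(hsNorm F ^ 2) := by
  rw [sq_hsNorm, h]
  have : (-F) ∘ₗ F = -(F ∘ₗ F) := by ext x; simp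
  rw [this, map_neg, neg_neg]

end HTypeAux
end HS

noncomputable section JopSec
namespace HTypeAux
set_option linter.unusedSectionVars false

open scoped RealInnerProductSpace

variable {V₁ : Type*} [NormedAddCommGroup V₁] [InnerProductSpace ℝ V₁] [FiniteDimensional ℝ V₁]
variable {V₂ : Type*} [AddCommGroup V₂] [Module ℝ V₂] [FiniteDimensional ℝ V₂]

/-- The J-operator associated to a dual vector `φ` on `V₂`: the unique endomorphism of `V₁`
with `⟪Jop B φ U, V⟫ = φ (B U V)`. -/
def Jop (B : V₁ →ₗ[ℝ] V₁ →ₗ[ℝ] V₂) (φ : V₂ →ₗ[ℝ] ℝ) : V₁ →ₗ[ℝ] V₁ where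
  toFun U := ∑ i, φ (B U (stdOrthonormalBasis ℝ V₁ i)) • stdOrthonormalBasis ℝ V₁ i
  map_add' U U' := by
    simp [add_smul, Finset.sum_add_distrib]
  map_smul' c U := by
    simp [Finset.smul_sum, smul_smul]

lemma inner_jop (B : V₁ →ₗ[ℝ] V₁ →ₗ[ℝ] V₂) (φ : V₂ →ₗ[ℝ] ℝ) (U V : V₁) :
    ⟪Jop B φ U, V⟫ = φ (B U V) := by
  have hV : V = ∑ i, ⟪stdOrthonormalBasis ℝ V₁ i, V⟫ • stdOrthonormalBasis ℝ V₁ i := by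
    have := (stdOrthonormalBasis ℝ V₁).sum_repr' V
    simp only [real_inner_comm] at this ⊢
    exact this.symm
  calc ⟪Jop B φ U, V⟫
      = ∑ i, φ (B U (stdOrthonormalBasis ℝ V₁ i)) * ⟪stdOrthonormalBasis ℝ V₁ i, V⟫ := by
        rw [Jop]
        simp [sum_inner, real_inner_smul_left]
    _ = φ (B U V) := by
        conv_rhs => rw [hV]
        rw [map_sum, map_sum]
        refine Finset.sum_congr rfl fun i _ => ?_
        simp [mul_comm]

/-- Uniqueness of operators defined by inner products. -/
lemma jop_unique {F G : V₁ →ₗ[ℝ] V₁} (h : ∀ U V : V₁, ⟪F U, V⟫ = ⟪G U, V⟫) : F = G := by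
  ext U
  exact ext_inner_right ℝ fun V => h U V

lemma jop_add (B : V₁ →ₗ[ℝ] V₁ →ₗ[ℝ] V₂) (φ ψ : V₂ →ₗ[ℝ] ℝ) :
    Jop B (φ + ψ) = Jop B φ + Jop B ψ := by
  refine jop_unique fun U V => ?_
  simp [inner_jop, inner_add_left]

lemma jop_smul (B : V₁ →ₗ[ℝ] V₁ →ₗ[ℝ] V₂) (c : ℝ) (φ : V₂ →ₗ[ℝ] ℝ) :
    Jop B (c • φ) = c • Jop B φ := by
  refine jop_unique fun U V => ?_
  simp [inner_jop, real_inner_smul_left]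

lemma jop_zero (B : V₁ →ₗ[ℝ] V₁ →ₗ[ℝ] V₂) : Jop B 0 = 0 := by
  refine jop_unique fun U V => ?_
  simp [inner_jop]

/-- `Jop` as a linear map in `φ`. -/
def JopL (B : V₁ →ₗ[ℝ] V₁ →ₗ[ℝ] V₂) : (V₂ →ₗ[ℝ] ℝ) →ₗ[ℝ] (V₁ →ₗ[ℝ] V₁) where
  toFun := Jop B
  map_add' := jop_add B
  map_smul' := jop_smul B

lemma bracket_skew (B : V₁ →ₗ[ℝ] V₁ →ₗ[ℝ] V₂) (hAlt : ∀ U : V₁, B U U = 0)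
    (U V : V₁) : B V U = -B U V := by
  have h := hAlt (U + V)
  have h2 : B V U + B U V = 0 := by
    simpa [map_add, hAlt] using h
  rw [← neg_eq_of_add_eq_zero_left h2]

lemma jop_skew (B : V₁ →ₗ[ℝ] V₁ →ₗ[ℝ] V₂) (hAlt : ∀ U : V₁, B U U = 0)
    (φ : V₂ →ₗ[ℝ] ℝ) : LinearMap.adjoint (Jop B φ) = -Jop B φ := by
  refine jop_unique fun U V => ?_
  calc ⟪LinearMap.adjoint (Jop B φ) U, V⟫
      = ⟪U, Jop B φ V⟫ := LinearMap.adjoint_inner_left _ V U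
    _ = ⟪Jop B φ V, U⟫ := real_inner_comm _ _
    _ = φ (B V U) := inner_jop B φ V U
    _ = -φ (B U V) := by rw [bracket_skew B hAlt, map_neg]
    _ = ⟪(-Jop B φ) U, V⟫ := by
        rw [LinearMap.neg_apply, inner_neg_left, inner_jop]

end HTypeAux
end JopSec



noncomputable section IPSec
namespace HTypeAux
set_option linter.unusedSectionVars false

open scoped RealInnerProductSpace

variable {V₂ : Type*} [AddCommGroup V₂] [Module ℝ V₂] [FiniteDimensional ℝ V₂]

lemma ip_nonneg {g : V₂ →ₗ[ℝ] V₂ →ₗ[ℝ] ℝ} (hg : IsInnerProd g) (t : V₂) : 0 ≤ g t t := by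
  rcases eq_or_ne t 0 with rfl | h
  · simp
  · exact (hg.posdef t h).le

lemma ip_cs {g : V₂ →ₗ[ℝ] V₂ →ₗ[ℝ] ℝ} (hg : IsInnerProd g) (s t : V₂) :
    (g s t) ^ 2 ≤ g s s * g t t := by
  rcases eq_or_ne t 0 with rfl | ht
  · simp
  · have ha : 0 < g t t := hg.posdef t ht
    have key : ∀ c : ℝ, 0 ≤ g s s - 2 * c * (g s t) + c ^ 2 * g t t := by
      intro c
      have h0 : 0 ≤ g (s - c • t) (s - c • t) := ip_nonneg hg _
      have hexp : g (s - c • t) (s - c • t)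
          = g s s - 2 * c * (g s t) + c ^ 2 * g t t := by
        simp only [map_sub, map_smul, LinearMap.sub_apply, LinearMap.smul_apply, smul_eq_mul]
        rw [hg.symm t s]
        ring
      linarith [hexp ▸ h0]
    have hk := key (g s t / g t t)
    have h1 : g s s - 2 * (g s t / g t t) * g s t + (g s t / g t t) ^ 2 * g t t
        = g s s - (g s t) ^ 2 / g t t := by
      field_simp
      ring
    rw [h1, sub_nonneg] at hk
    exact (div_le_iff₀ ha).mp hk

lemma gnorm_sq_eq {g : V₂ →ₗ[ℝ] V₂ →ₗ[ℝ] ℝ} (hg : IsInnerProd g) (t : V₂) :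
    gnorm g t ^ 2 = g t t := Real.sq_sqrt (ip_nonneg hg t)

lemma gtt_of_gnorm_one {g : V₂ →ₗ[ℝ] V₂ →ₗ[ℝ] ℝ} (hg : IsInnerProd g) {t : V₂}
    (h : gnorm g t = 1) : g t t = 1 := by
  rw [← gnorm_sq_eq hg, h, one_pow]

lemma gnorm_unit {g : V₂ →ₗ[ℝ] V₂ →ₗ[ℝ] ℝ} (hg : IsInnerProd g) {t : V₂} (ht : t ≠ 0) :
    gnorm g ((Real.sqrt (g t t))⁻¹ • t) = 1 := by
  have hpos := hg.posdef t ht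
  have hs : 0 < Real.sqrt (g t t) := Real.sqrt_pos.mpr hpos
  rw [gnorm]
  simp only [map_smul, LinearMap.smul_apply, smul_eq_mul]
  have h1 : (Real.sqrt (g t t))⁻¹ * ((Real.sqrt (g t t))⁻¹ * g t t) = 1 := by
    rw [← mul_assoc, ← mul_inv, Real.mul_self_sqrt (ip_nonneg hg t)]
    exact inv_mul_cancel₀ (ne_of_gt hpos)
  rw [h1]
  exact Real.sqrt_one

lemma flip_injective {g : V₂ →ₗ[ℝ] V₂ →ₗ[ℝ] ℝ} (hg : IsInnerProd g) :
    Function.Injective g.flip := by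
  rw [← LinearMap.ker_eq_bot]
  refine (Submodule.eq_bot_iff _).mpr fun s hs => ?_
  by_contra hne
  have hpos := hg.posdef s hne
  have h0 : g.flip s s = 0 := by rw [LinearMap.mem_ker.mp hs]; rfl
  rw [LinearMap.flip_apply] at h0
  linarith

lemma flip_surjective {g : V₂ →ₗ[ℝ] V₂ →ₗ[ℝ] ℝ} (hg : IsInnerProd g) :
    Function.Surjective g.flip := by
  have hrank : Module.finrank ℝ V₂ = Module.finrank ℝ (Module.Dual ℝ V₂) :=
    Subspace.dual_finrank_eq.symm
  exact (LinearMap.injective_iff_surjective_of_finrank_eq_finrank hrank).mp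
    (flip_injective hg)

end HTypeAux
end IPSec


noncomputable section GqSec
namespace HTypeAux
set_option linter.unusedSectionVars false

open scoped RealInnerProductSpace

variable {V₁ : Type*} [NormedAddCommGroup V₁] [InnerProductSpace ℝ V₁] [FiniteDimensional ℝ V₁]
variable {V₂ : Type*} [AddCommGroup V₂] [Module ℝ V₂] [FiniteDimensional ℝ V₂]

lemma adjoint_smul' (c : ℝ) (F : V₁ →ₗ[ℝ] V₁) :
    LinearMap.adjoint (c • F) = c • LinearMap.adjoint F := by
  symm
  rw [LinearMap.eq_adjoint_iff]
  intro x y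
  rw [LinearMap.smul_apply, LinearMap.smul_apply, real_inner_smul_left,
    LinearMap.adjoint_inner_left, real_inner_smul_right]

/-- The candidate limit inner product on the dual of `V₂`:
`Gq B φ ψ = trace((J_φ)* ∘ J_ψ) / dim V₁`. -/
def Gq (B : V₁ →ₗ[ℝ] V₁ →ₗ[ℝ] V₂) :
    Module.Dual ℝ V₂ →ₗ[ℝ] Module.Dual ℝ V₂ →ₗ[ℝ] ℝ :=
  LinearMap.mk₂ ℝ
    (fun φ ψ => LinearMap.trace ℝ V₁ (LinearMap.adjoint (Jop B φ) ∘ₗ Jop B ψ)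
      / (Module.finrank ℝ V₁ : ℝ))
    (fun φ φ' ψ => by
      rw [jop_add, map_add, LinearMap.add_comp, map_add, add_div])
    (fun c φ ψ => by
      rw [jop_smul, adjoint_smul', LinearMap.smul_comp, map_smul, smul_eq_mul, mul_div_assoc,
        smul_eq_mul])
    (fun φ ψ ψ' => by
      rw [jop_add, LinearMap.comp_add, map_add, add_div])
    (fun c φ ψ => by
      rw [jop_smul, LinearMap.comp_smul, map_smul, smul_eq_mul, mul_div_assoc, smul_eq_mul])

lemma Gq_apply (B : V₁ →ₗ[ℝ] V₁ →ₗ[ℝ] V₂) (φ ψ : Module.Dual ℝ V₂) :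
    Gq B φ ψ = LinearMap.trace ℝ V₁ (LinearMap.adjoint (Jop B φ) ∘ₗ Jop B ψ)
      / (Module.finrank ℝ V₁ : ℝ) := rfl

lemma Gq_self (B : V₁ →ₗ[ℝ] V₁ →ₗ[ℝ] V₂) (φ : Module.Dual ℝ V₂) :
    Gq B φ φ = hsNorm (Jop B φ) ^ 2 / (Module.finrank ℝ V₁ : ℝ) := by
  rw [Gq_apply, sq_hsNorm]

lemma jop_injective (B : V₁ →ₗ[ℝ] V₁ →ₗ[ℝ] V₂)
    (hSpan : Submodule.span ℝ {t : V₂ | ∃ U V : V₁, B U V = t} = ⊤)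
    {φ : Module.Dual ℝ V₂} (h : Jop B φ = 0) : φ = 0 := by
  have hk : {t : V₂ | ∃ U V : V₁, B U V = t} ⊆ (LinearMap.ker φ : Set V₂) := by
    rintro t ⟨U, V, rfl⟩
    have h1 := inner_jop B φ U V
    rw [h] at h1
    simp only [LinearMap.zero_apply, inner_zero_left] at h1
    exact LinearMap.mem_ker.mpr h1.symm
  have : (⊤ : Submodule ℝ V₂) ≤ LinearMap.ker φ := by
    rw [← hSpan]
    exact Submodule.span_le.mpr hk
  ext t
  simpa using LinearMap.mem_ker.mp (this Submodule.mem_top)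

lemma Gq_pos (B : V₁ →ₗ[ℝ] V₁ →ₗ[ℝ] V₂) (hm : 0 < Module.finrank ℝ V₁)
    (hSpan : Submodule.span ℝ {t : V₂ | ∃ U V : V₁, B U V = t} = ⊤)
    {φ : Module.Dual ℝ V₂} (hφ : φ ≠ 0) : 0 < Gq B φ φ := by
  rw [Gq_self]
  have hne : hsNorm (Jop B φ) ≠ 0 := by
    intro h0
    exact hφ (jop_injective B hSpan (hsNorm_eq_zero h0))
  have hpos : 0 < hsNorm (Jop B φ) := lt_of_le_of_ne (hsNorm_nonneg _) (Ne.symm hne)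
  positivity

lemma Gq_symm (B : V₁ →ₗ[ℝ] V₁ →ₗ[ℝ] V₂) (hAlt : ∀ U : V₁, B U U = 0)
    (φ ψ : Module.Dual ℝ V₂) : Gq B φ ψ = Gq B ψ φ := by
  rw [Gq_apply, Gq_apply, jop_skew B hAlt, jop_skew B hAlt]
  have h1 : (-Jop B φ) ∘ₗ Jop B ψ = -(Jop B φ * Jop B ψ) := by
    ext x; simp [Module.End.mul_apply]
  have h2 : (-Jop B ψ) ∘ₗ Jop B φ = -(Jop B ψ * Jop B φ) := by
    ext x; simp [Module.End.mul_apply]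
  rw [h1, h2, map_neg, map_neg, LinearMap.trace_mul_comm]

end HTypeAux
end GqSec


noncomputable section BddSec
namespace HTypeAux
set_option linter.unusedSectionVars false

open scoped RealInnerProductSpace

variable {V₁ : Type*} [NormedAddCommGroup V₁] [InnerProductSpace ℝ V₁] [FiniteDimensional ℝ V₁]
variable {V₂ : Type*} [AddCommGroup V₂] [Module ℝ V₂] [FiniteDimensional ℝ V₂]

/-- A default inner product on `V₂`, built from a basis. -/
def gDefault : V₂ →ₗ[ℝ] V₂ →ₗ[ℝ] ℝ :=
  LinearMap.mk₂ ℝ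
    (fun s t => ∑ i, (Module.finBasis ℝ V₂).repr s i * (Module.finBasis ℝ V₂).repr t i)
    (fun s s' t => by
      simp [map_add, add_mul, Finset.sum_add_distrib])
    (fun c s t => by
      simp [Finset.mul_sum, mul_assoc])
    (fun s t t' => by
      simp [map_add, mul_add, Finset.sum_add_distrib])
    (fun c s t => by
      simp [Finset.mul_sum]
      refine Finset.sum_congr rfl fun i _ => by ring)

lemma gDefault_isInnerProd : IsInnerProd (gDefault (V₂ := V₂)) := by
  constructor
  · intro s t
    simp only [gDefault, LinearMap.mk₂_apply]
    exact Finset.sum_congr rfl fun i _ => mul_comm _ _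
  · intro t ht
    simp only [gDefault, LinearMap.mk₂_apply]
    have hrep : (Module.finBasis ℝ V₂).repr t ≠ 0 := by
      intro h
      exact ht (by simpa using congrArg (Module.finBasis ℝ V₂).repr.symm h)
    obtain ⟨i, hi⟩ : ∃ i, (Module.finBasis ℝ V₂).repr t i ≠ 0 := by
      by_contra hall
      push_neg at hall
      exact hrep (Finsupp.ext hall)
    refine Finset.sum_pos' (fun j _ => mul_self_nonneg _) ⟨i, Finset.mem_univ i, ?_⟩
    exact mul_self_pos.mpr hi

/-- The H-type-deviation defining set is nonempty. -/
lemma exists_datum (B : V₁ →ₗ[ℝ] V₁ →ₗ[ℝ] V₂) :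
    ∃ (g : V₂ →ₗ[ℝ] V₂ →ₗ[ℝ] ℝ) (J : V₂ → V₁ →ₗ[ℝ] V₁),
      IsInnerProd g ∧ IsJOp B g J ∧ deltaOf g J = deltaOf g J :=
  ⟨gDefault, fun T => Jop B (gDefault.flip T), gDefault_isInnerProd,
    fun T U V => by rw [inner_jop, LinearMap.flip_apply], rfl⟩

lemma isJOp_unique {B : V₁ →ₗ[ℝ] V₁ →ₗ[ℝ] V₂} {g : V₂ →ₗ[ℝ] V₂ →ₗ[ℝ] ℝ}
    {J : V₂ → V₁ →ₗ[ℝ] V₁} (hJ : IsJOp B g J) (T : V₂) :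
    J T = Jop B (g.flip T) := by
  refine jop_unique fun U V => ?_
  rw [hJ T U V, inner_jop, LinearMap.flip_apply]

lemma bddAbove_sphere_image {g : V₂ →ₗ[ℝ] V₂ →ₗ[ℝ] ℝ} (hg : IsInnerProd g)
    (B : V₁ →ₗ[ℝ] V₁ →ₗ[ℝ] V₂) :
    BddAbove ((fun T => hsNorm (Jop B (g.flip T) ∘ₗ Jop B (g.flip T) + LinearMap.id))
      '' {T : V₂ | gnorm g T = 1}) := by
  classical
  set n := Module.finrank ℝ V₂ with hn
  set c := Module.finBasis ℝ V₂ with hc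
  choose sfun hsfun using fun i : Fin n => flip_surjective hg (c.coord i)
  set Mv : Fin n → ℝ := fun i => Real.sqrt (g (sfun i) (sfun i)) with hMv
  set Fv : Fin n → V₁ →ₗ[ℝ] V₁ := fun i => Jop B (g.flip (c i)) with hFv
  refine ⟨(∑ i, ∑ j, Mv i * Mv j * hsNorm (Fv i ∘ₗ Fv j))
    + Real.sqrt (Module.finrank ℝ V₁), ?_⟩
  rintro x ⟨T, hT, rfl⟩
  have hT1 : g T T = 1 := gtt_of_gnorm_one hg hT
  set a : Fin n → ℝ := fun i => c.repr T i with ha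
  have habs : ∀ i, |a i| ≤ Mv i := by
    intro i
    have h1 : a i = g T (sfun i) := by
      have := congrFun (congrArg (fun (f : Module.Dual ℝ V₂) => (f : V₂ → ℝ)) (hsfun i)) T
      simp only [LinearMap.flip_apply] at this
      rw [ha]
      dsimp only
      rw [← Module.Basis.coord_apply, ← this]
    have h2 : (g T (sfun i)) ^ 2 ≤ g (sfun i) (sfun i) := by
      have := ip_cs hg T (sfun i)
      rwa [hT1, one_mul] at this
    calc |a i| = Real.sqrt ((g T (sfun i)) ^ 2) := by rw [h1, Real.sqrt_sq_eq_abs]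
      _ ≤ Mv i := Real.sqrt_le_sqrt h2
  have hJT : Jop B (g.flip T) = ∑ i, a i • Fv i := by
    conv_lhs => rw [← Module.Basis.sum_repr c T]
    have h1 : g.flip (∑ i, c.repr T i • c i) = ∑ i, a i • g.flip (c i) := by
      rw [map_sum]
      exact Finset.sum_congr rfl fun i _ => by rw [map_smul, ha]
    rw [h1]
    have h2 : Jop B (∑ i, a i • g.flip (c i)) = JopL B (∑ i, a i • g.flip (c i)) := rfl
    rw [h2, map_sum]
    exact Finset.sum_congr rfl fun i _ => by rw [map_smul, hFv]; rfl
  have hcomp : Jop B (g.flip T) ∘ₗ Jop B (g.flip T)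
      = ∑ i, ∑ j, (a i * a j) • (Fv i ∘ₗ Fv j) := by
    rw [hJT]
    show (∑ i, a i • Fv i) * (∑ i, a i • Fv i) = _
    rw [Finset.sum_mul]
    refine Finset.sum_congr rfl fun i _ => ?_
    rw [Finset.mul_sum]
    refine Finset.sum_congr rfl fun j _ => ?_
    rw [show Fv i ∘ₗ Fv j = Fv i * Fv j from rfl, smul_mul_smul_comm]
  calc hsNorm (Jop B (g.flip T) ∘ₗ Jop B (g.flip T) + LinearMap.id)
      ≤ hsNorm (Jop B (g.flip T) ∘ₗ Jop B (g.flip T)) + hsNorm (LinearMap.id : V₁ →ₗ[ℝ] V₁) :=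
        hsNorm_add_le _ _
    _ ≤ (∑ i, ∑ j, Mv i * Mv j * hsNorm (Fv i ∘ₗ Fv j)) + Real.sqrt (Module.finrank ℝ V₁) := by
        rw [hsNorm_id]
        refine add_le_add ?_ le_rfl
        rw [hcomp]
        refine (hsNorm_sum_le _ _).trans ?_
        refine (Finset.sum_le_sum fun i _ => hsNorm_sum_le _ _).trans ?_
        refine Finset.sum_le_sum fun i _ => Finset.sum_le_sum fun j _ => ?_
        rw [hsNorm_smul, abs_mul]
        refine mul_le_mul ?_ le_rfl (hsNorm_nonneg _) ?_
        · exact mul_le_mul (habs i) (habs j) (abs_nonneg _)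
            ((abs_nonneg _).trans (habs i))
        · exact mul_nonneg ((abs_nonneg _).trans (habs i)) ((abs_nonneg _).trans (habs j))

end HTypeAux
end BddSec


noncomputable section KeySec
namespace HTypeAux
set_option linter.unusedSectionVars false

open scoped RealInnerProductSpace

variable {V₁ : Type*} [NormedAddCommGroup V₁] [InnerProductSpace ℝ V₁] [FiniteDimensional ℝ V₁]
variable {V₂ : Type*} [AddCommGroup V₂] [Module ℝ V₂] [FiniteDimensional ℝ V₂]

/-- The key rigidity lemma: if the H-type deviation vanishes, then for every dual vector `φ`
the square of the J-operator is the scalar `-(Gq B φ φ)`. -/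
lemma jop_sq (B : V₁ →ₗ[ℝ] V₁ →ₗ[ℝ] V₂)
    (hm : 1 ≤ Module.finrank ℝ V₁)
    (hAlt : ∀ U : V₁, B U U = 0)
    (hSpan : Submodule.span ℝ {t : V₂ | ∃ U V : V₁, B U V = t} = ⊤)
    (hdev : htypeDeviation B = 0) (φ : Module.Dual ℝ V₂) :
    Jop B φ ∘ₗ Jop B φ = -(Gq B φ φ) • (LinearMap.id : V₁ →ₗ[ℝ] V₁) := by
  classical
  have hm'pos : (0:ℝ) < (Module.finrank ℝ V₁ : ℝ) := by exact_mod_cast hm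
  have hsqm : 0 < Real.sqrt (Module.finrank ℝ V₁ : ℝ) := Real.sqrt_pos.mpr hm'pos
  rcases eq_or_ne φ 0 with rfl | hφ
  · have hGq0 : Gq B (0 : Module.Dual ℝ V₂) 0 = 0 := by
      rw [map_zero]
    rw [jop_zero, hGq0]
    ext x
    simp
  set q := Gq B φ φ with hq
  clear_value q
  have hqpos : 0 < q := by rw [hq]; exact Gq_pos B hm hSpan hφ
  set P := Jop B φ ∘ₗ Jop B φ with hP
  clear_value P
  have hKn : 0 ≤ hsNorm (P + q • (LinearMap.id : V₁ →ₗ[ℝ] V₁)) := hsNorm_nonneg _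
  have main : ∀ ε : ℝ, 0 < ε → ε ≤ 1/2 →
      hsNorm (P + q • (LinearMap.id : V₁ →ₗ[ℝ] V₁))
        ≤ (4 * Real.sqrt (Module.finrank ℝ V₁ : ℝ) * q) * ε := by
    intro ε hε hε2
    have hS : {d : ℝ | ∃ (g : V₂ →ₗ[ℝ] V₂ →ₗ[ℝ] ℝ) (J : V₂ → V₁ →ₗ[ℝ] V₁),
        IsInnerProd g ∧ IsJOp B g J ∧ d = deltaOf g J}.Nonempty := by
      obtain ⟨g, J, h1, h2, _⟩ := exists_datum B
      exact ⟨deltaOf g J, g, J, h1, h2, rfl⟩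
    have hlt : sInf {d : ℝ | ∃ (g : V₂ →ₗ[ℝ] V₂ →ₗ[ℝ] ℝ) (J : V₂ → V₁ →ₗ[ℝ] V₁),
        IsInnerProd g ∧ IsJOp B g J ∧ d = deltaOf g J} < ε := by
      have h0 : htypeDeviation B < ε := by rw [hdev]; exact hε
      exact h0
    obtain ⟨d, hdS, hdlt⟩ := exists_lt_of_csInf_lt hS hlt
    obtain ⟨g, J, hg, hJop, rfl⟩ := hdS
    have hJeq : ∀ T, J T = Jop B (g.flip T) := isJOp_unique hJop
    have hfun : (fun T : V₂ => hsNorm (J T ∘ₗ J T + (LinearMap.id : V₁ →ₗ[ℝ] V₁)))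
        = (fun T => hsNorm (Jop B (g.flip T) ∘ₗ Jop B (g.flip T) + LinearMap.id)) :=
      funext fun T => by rw [hJeq]
    have hbdd : BddAbove ((fun T : V₂ => hsNorm (J T ∘ₗ J T + LinearMap.id))
        '' {T : V₂ | gnorm g T = 1}) := by
      rw [hfun]
      exact bddAbove_sphere_image hg B
    have hsup : sSup ((fun T : V₂ => hsNorm (J T ∘ₗ J T + LinearMap.id))
        '' {T : V₂ | gnorm g T = 1}) < Real.sqrt (Module.finrank ℝ V₁ : ℝ) * ε := by
      have hdval : deltaOf g J = (Real.sqrt (Module.finrank ℝ V₁ : ℝ))⁻¹ *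
          sSup ((fun T : V₂ => hsNorm (J T ∘ₗ J T + LinearMap.id))
            '' {T : V₂ | gnorm g T = 1}) := rfl
      rw [hdval] at hdlt
      calc sSup ((fun T : V₂ => hsNorm (J T ∘ₗ J T + LinearMap.id))
            '' {T : V₂ | gnorm g T = 1})
          = Real.sqrt (Module.finrank ℝ V₁ : ℝ) *
            ((Real.sqrt (Module.finrank ℝ V₁ : ℝ))⁻¹ *
              sSup ((fun T : V₂ => hsNorm (J T ∘ₗ J T + LinearMap.id))
                '' {T : V₂ | gnorm g T = 1})) := by
            rw [← mul_assoc, mul_inv_cancel₀ (ne_of_gt hsqm), one_mul]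
        _ < Real.sqrt (Module.finrank ℝ V₁ : ℝ) * ε := by
            exact mul_lt_mul_of_pos_left hdlt hsqm
    have hpoint : ∀ T : V₂, gnorm g T = 1 →
        hsNorm (Jop B (g.flip T) ∘ₗ Jop B (g.flip T) + (LinearMap.id : V₁ →ₗ[ℝ] V₁))
          ≤ Real.sqrt (Module.finrank ℝ V₁ : ℝ) * ε := by
      intro T hT
      have hmem : hsNorm (J T ∘ₗ J T + (LinearMap.id : V₁ →ₗ[ℝ] V₁))
          ∈ ((fun T : V₂ => hsNorm (J T ∘ₗ J T + LinearMap.id))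
            '' {T : V₂ | gnorm g T = 1}) := ⟨T, hT, rfl⟩
      have hle := le_csSup hbdd hmem
      rw [hJeq T] at hle
      exact hle.trans hsup.le
    obtain ⟨T₀, hT₀⟩ := flip_surjective hg φ
    have hT₀ne : T₀ ≠ 0 := by
      rintro rfl
      apply hφ
      rw [← hT₀, map_zero]
    have hrpos : 0 < Real.sqrt (g T₀ T₀) := Real.sqrt_pos.mpr (hg.posdef T₀ hT₀ne)
    set r := Real.sqrt (g T₀ T₀) with hr
    clear_value r
    have hr2 : r ^ 2 = g T₀ T₀ := by rw [hr]; exact Real.sq_sqrt (ip_nonneg hg T₀)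
    have hunit : gnorm g (r⁻¹ • T₀) = 1 := by rw [hr]; exact gnorm_unit hg hT₀ne
    have hflip : g.flip (r⁻¹ • T₀) = r⁻¹ • φ := by rw [map_smul, hT₀]
    have h1 : hsNorm (Jop B (r⁻¹ • φ) ∘ₗ Jop B (r⁻¹ • φ) + (LinearMap.id : V₁ →ₗ[ℝ] V₁))
        ≤ Real.sqrt (Module.finrank ℝ V₁ : ℝ) * ε := by
      have := hpoint _ hunit
      rwa [hflip] at this
    have hjsmul : Jop B (r⁻¹ • φ) = r⁻¹ • Jop B φ := jop_smul B _ φ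
    have hsc : P + (r ^ 2) • (LinearMap.id : V₁ →ₗ[ℝ] V₁)
        = (r ^ 2) • (Jop B (r⁻¹ • φ) ∘ₗ Jop B (r⁻¹ • φ) + LinearMap.id) := by
      rw [hjsmul, smul_add]
      congr 1
      have hcc : (r⁻¹ • Jop B φ) ∘ₗ (r⁻¹ • Jop B φ) = (r⁻¹ * r⁻¹) • P := by
        rw [hP]
        show (r⁻¹ • Jop B φ) * (r⁻¹ • Jop B φ) = (r⁻¹ * r⁻¹) • (Jop B φ ∘ₗ Jop B φ)
        rw [smul_mul_smul_comm]
        rfl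
      rw [hcc, smul_smul]
      have hone : r ^ 2 * (r⁻¹ * r⁻¹) = 1 := by
        rw [sq]
        field_simp
      rw [hone, one_smul]
    have h2 : hsNorm (P + (r ^ 2) • (LinearMap.id : V₁ →ₗ[ℝ] V₁))
        ≤ Real.sqrt (Module.finrank ℝ V₁ : ℝ) * ε * r ^ 2 := by
      rw [hsc, hsNorm_smul, abs_of_nonneg (sq_nonneg r)]
      calc r ^ 2 * hsNorm (Jop B (r⁻¹ • φ) ∘ₗ Jop B (r⁻¹ • φ) + LinearMap.id)
          ≤ r ^ 2 * (Real.sqrt (Module.finrank ℝ V₁ : ℝ) * ε) :=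
            mul_le_mul_of_nonneg_left h1 (sq_nonneg r)
        _ = Real.sqrt (Module.finrank ℝ V₁ : ℝ) * ε * r ^ 2 := by ring
    have htr : LinearMap.trace ℝ V₁ (P + (r ^ 2) • (LinearMap.id : V₁ →ₗ[ℝ] V₁))
        = (Module.finrank ℝ V₁ : ℝ) * (r ^ 2 - q) := by
      rw [map_add, map_smul, LinearMap.trace_id]
      have hPtr : LinearMap.trace ℝ V₁ P = -(hsNorm (Jop B φ) ^ 2) := by
        rw [hP]
        exact trace_comp_self_of_skew (jop_skew B hAlt φ)
      have hq' : hsNorm (Jop B φ) ^ 2 = (Module.finrank ℝ V₁ : ℝ) * q := by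
        rw [hq, Gq_self]
        field_simp
      rw [hPtr, hq', smul_eq_mul]
      ring
    have h3 : |r ^ 2 - q| ≤ ε * r ^ 2 := by
      have habstr := abs_trace_le (P + (r ^ 2) • (LinearMap.id : V₁ →ₗ[ℝ] V₁))
      rw [htr] at habstr
      have h4 : |(Module.finrank ℝ V₁ : ℝ) * (r ^ 2 - q)|
          ≤ Real.sqrt (Module.finrank ℝ V₁ : ℝ) *
            (Real.sqrt (Module.finrank ℝ V₁ : ℝ) * ε * r ^ 2) :=
        habstr.trans (mul_le_mul_of_nonneg_left h2 (Real.sqrt_nonneg _))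
      rw [abs_mul, abs_of_pos hm'pos] at h4
      have h5 : Real.sqrt (Module.finrank ℝ V₁ : ℝ) *
          (Real.sqrt (Module.finrank ℝ V₁ : ℝ) * ε * r ^ 2)
          = (Module.finrank ℝ V₁ : ℝ) * (ε * r ^ 2) := by
        rw [show Real.sqrt (Module.finrank ℝ V₁ : ℝ) *
            (Real.sqrt (Module.finrank ℝ V₁ : ℝ) * ε * r ^ 2)
            = Real.sqrt (Module.finrank ℝ V₁ : ℝ) * Real.sqrt (Module.finrank ℝ V₁ : ℝ) *
              (ε * r ^ 2) by ring, Real.mul_self_sqrt hm'pos.le]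
      rw [h5] at h4
      exact le_of_mul_le_mul_left h4 hm'pos
    have h6 : r ^ 2 ≤ 2 * q := by
      have h61 : ε * r ^ 2 ≤ (1/2) * r ^ 2 :=
        mul_le_mul_of_nonneg_right hε2 (sq_nonneg r)
      have h62 := (abs_le.mp h3).2
      linarith only [h61, h62]
    have h7 : hsNorm (P + q • (LinearMap.id : V₁ →ₗ[ℝ] V₁))
        ≤ Real.sqrt (Module.finrank ℝ V₁ : ℝ) * ε * r ^ 2
          + |q - r ^ 2| * Real.sqrt (Module.finrank ℝ V₁ : ℝ) := by
      have hdecomp : P + q • (LinearMap.id : V₁ →ₗ[ℝ] V₁)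
          = (P + (r ^ 2) • LinearMap.id) + (q - r ^ 2) • LinearMap.id := by
        rw [add_assoc, ← add_smul, show r ^ 2 + (q - r ^ 2) = q by ring]
      rw [hdecomp]
      refine (hsNorm_add_le _ _).trans ?_
      rw [hsNorm_smul, hsNorm_id]
      exact add_le_add h2 le_rfl
    have h8 : |q - r ^ 2| ≤ ε * r ^ 2 := by rw [abs_sub_comm]; exact h3
    have hA : Real.sqrt (Module.finrank ℝ V₁ : ℝ) * ε * r ^ 2
        ≤ Real.sqrt (Module.finrank ℝ V₁ : ℝ) * ε * (2 * q) :=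
      mul_le_mul_of_nonneg_left h6 (by positivity)
    have hB : |q - r ^ 2| * Real.sqrt (Module.finrank ℝ V₁ : ℝ)
        ≤ (ε * (2 * q)) * Real.sqrt (Module.finrank ℝ V₁ : ℝ) := by
      refine mul_le_mul_of_nonneg_right (h8.trans ?_) (Real.sqrt_nonneg _)
      exact mul_le_mul_of_nonneg_left h6 hε.le
    calc hsNorm (P + q • (LinearMap.id : V₁ →ₗ[ℝ] V₁))
        ≤ Real.sqrt (Module.finrank ℝ V₁ : ℝ) * ε * r ^ 2
          + |q - r ^ 2| * Real.sqrt (Module.finrank ℝ V₁ : ℝ) := h7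
      _ ≤ Real.sqrt (Module.finrank ℝ V₁ : ℝ) * ε * (2 * q)
          + (ε * (2 * q)) * Real.sqrt (Module.finrank ℝ V₁ : ℝ) := add_le_add hA hB
      _ = (4 * Real.sqrt (Module.finrank ℝ V₁ : ℝ) * q) * ε := by ring
  have hK0 : hsNorm (P + q • (LinearMap.id : V₁ →ₗ[ℝ] V₁)) = 0 := by
    by_contra hne
    have hKpos : 0 < hsNorm (P + q • (LinearMap.id : V₁ →ₗ[ℝ] V₁)) :=
      lt_of_le_of_ne hKn (Ne.symm hne)
    set C := 4 * Real.sqrt (Module.finrank ℝ V₁ : ℝ) * q with hC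
    have hCpos : 0 < C := by positivity
    have hεpos : 0 < min (1/2) (hsNorm (P + q • (LinearMap.id : V₁ →ₗ[ℝ] V₁)) / (2 * C)) := by
      positivity
    have hmain := main _ hεpos (min_le_left _ _)
    have hstep : C * min (1/2) (hsNorm (P + q • (LinearMap.id : V₁ →ₗ[ℝ] V₁)) / (2 * C))
        ≤ C * (hsNorm (P + q • (LinearMap.id : V₁ →ₗ[ℝ] V₁)) / (2 * C)) :=
      mul_le_mul_of_nonneg_left (min_le_right _ _) hCpos.le
    have heq : C * (hsNorm (P + q • (LinearMap.id : V₁ →ₗ[ℝ] V₁)) / (2 * C))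
        = hsNorm (P + q • (LinearMap.id : V₁ →ₗ[ℝ] V₁)) / 2 := by
      field_simp
    rw [heq] at hstep
    linarith
  have hzero : P + q • (LinearMap.id : V₁ →ₗ[ℝ] V₁) = 0 := hsNorm_eq_zero hK0
  have h9 : P = -(q • (LinearMap.id : V₁ →ₗ[ℝ] V₁)) := eq_neg_of_add_eq_zero_left hzero
  rw [neg_smul]
  exact h9

end HTypeAux
end KeySec

noncomputable section

open scoped RealInnerProductSpace

/-- A step-two Carnot datum has H-type deviation zero if and only if it is a nascent
H-type group, i.e. there is a vertical inner product `g` on `V₂` with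
`(J^g_T)² = −‖T‖_g² id` for every `T ∈ V₂`. -/
theorem htypeDeviation_eq_zero_iff_nascent
    {V₁ : Type*} [NormedAddCommGroup V₁] [InnerProductSpace ℝ V₁] [FiniteDimensional ℝ V₁]
    {V₂ : Type*} [AddCommGroup V₂] [Module ℝ V₂] [FiniteDimensional ℝ V₂]
    (m : ℕ) (hm : 1 ≤ m) (hdim₁ : Module.finrank ℝ V₁ = m)
    (hdim₂ : 1 ≤ Module.finrank ℝ V₂)
    (B : V₁ →ₗ[ℝ] V₁ →ₗ[ℝ] V₂)
    (hAlt : ∀ U : V₁, B U U = 0)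
    (hSpan : Submodule.span ℝ {t : V₂ | ∃ U V : V₁, B U V = t} = ⊤) :
    htypeDeviation B = 0 ↔
      ∃ (g : V₂ →ₗ[ℝ] V₂ →ₗ[ℝ] ℝ) (J : V₂ → V₁ →ₗ[ℝ] V₁),
        IsInnerProd g ∧ IsJOp B g J ∧
        ∀ T : V₂, J T ∘ₗ J T = -(gnorm g T ^ 2) • (LinearMap.id : V₁ →ₗ[ℝ] V₁) := by
  classical
  have hm1 : 1 ≤ Module.finrank ℝ V₁ := hdim₁ ▸ hm
  constructor
  · -- forward direction
    intro hdev
    -- the bilinear form `Gq B` is an inner product on the dual of `V₂`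
    have hGqInj : Function.Injective (HTypeAux.Gq B) := by
      rw [← LinearMap.ker_eq_bot]
      refine (Submodule.eq_bot_iff _).mpr fun φ hφ => ?_
      by_contra hne
      have hpos := HTypeAux.Gq_pos B hm1 hSpan hne
      have h0 : HTypeAux.Gq B φ φ = 0 := by
        rw [LinearMap.mem_ker.mp hφ]
        rfl
      rw [h0] at hpos
      exact lt_irrefl _ hpos
    have hrank : Module.finrank ℝ (Module.Dual ℝ V₂)
        = Module.finrank ℝ (Module.Dual ℝ (Module.Dual ℝ V₂)) :=
      Subspace.dual_finrank_eq.symm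
    have hGqBij : Function.Bijective (HTypeAux.Gq B) :=
      ⟨hGqInj, (LinearMap.injective_iff_surjective_of_finrank_eq_finrank hrank).mp hGqInj⟩
    let Geq : Module.Dual ℝ V₂ ≃ₗ[ℝ] Module.Dual ℝ (Module.Dual ℝ V₂) :=
      LinearEquiv.ofBijective (HTypeAux.Gq B) hGqBij
    let flat : V₂ →ₗ[ℝ] Module.Dual ℝ V₂ :=
      (Geq.symm.toLinearMap) ∘ₗ (Module.evalEquiv ℝ V₂).toLinearMap
    have hflat : ∀ (s : V₂) (ψ : Module.Dual ℝ V₂), HTypeAux.Gq B (flat s) ψ = ψ s := by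
      intro s ψ
      have h1 : HTypeAux.Gq B (flat s) = Module.evalEquiv ℝ V₂ s := by
        show Geq (Geq.symm (Module.evalEquiv ℝ V₂ s)) = Module.evalEquiv ℝ V₂ s
        exact Geq.apply_symm_apply _
      rw [h1, Module.evalEquiv_apply, Module.Dual.eval_apply]
    have hflatInj : Function.Injective flat := by
      intro s t hst
      have h1 : (Module.evalEquiv ℝ V₂) s = (Module.evalEquiv ℝ V₂) t := by
        have := congrArg Geq hst
        simpa [flat, Geq.apply_symm_apply] using this
      exact (Module.evalEquiv ℝ V₂).injective h1
    set gOut : V₂ →ₗ[ℝ] V₂ →ₗ[ℝ] ℝ := (HTypeAux.Gq B).compl₁₂ flat flat with hgOut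
    have hgOut_apply : ∀ s t : V₂, gOut s t = HTypeAux.Gq B (flat s) (flat t) :=
      fun s t => LinearMap.compl₁₂_apply _ _ _ _ _
    have hgOut_apply' : ∀ s t : V₂, gOut s t = (flat t) s := by
      intro s t
      rw [hgOut_apply, hflat]
    have hgIP : IsInnerProd gOut := by
      constructor
      · intro s t
        rw [hgOut_apply, hgOut_apply, HTypeAux.Gq_symm B hAlt]
      · intro t ht
        rw [hgOut_apply]
        refine HTypeAux.Gq_pos B hm1 hSpan ?_
        intro h0
        exact ht (hflatInj (h0.trans (map_zero flat).symm))
    have hgflip : ∀ T : V₂, gOut.flip T = flat T := by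
      intro T
      ext s
      rw [LinearMap.flip_apply, hgOut_apply' s T]
    refine ⟨gOut, fun T => HTypeAux.Jop B (gOut.flip T), hgIP, ?_, ?_⟩
    · intro T U V
      rw [HTypeAux.inner_jop, LinearMap.flip_apply]
    · intro T
      have hkey := HTypeAux.jop_sq B hm1 hAlt hSpan hdev (gOut.flip T)
      rw [hkey]
      congr 1
      rw [HTypeAux.gnorm_sq_eq hgIP T, hgflip, hgOut_apply]
  · -- reverse direction
    rintro ⟨g, J, hg, hJ, hsq⟩
    have hval : ∀ T : V₂, gnorm g T = 1 →
        hsNorm (J T ∘ₗ J T + (LinearMap.id : V₁ →ₗ[ℝ] V₁)) = 0 := by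
      intro T hT
      have h1 := hsq T
      rw [hT] at h1
      have h2 : J T ∘ₗ J T + (LinearMap.id : V₁ →ₗ[ℝ] V₁) = 0 := by
        rw [h1]
        ext x
        simp
      rw [h2]
      exact HTypeAux.hsNorm_zero
    have : Nontrivial V₂ := Module.nontrivial_of_finrank_pos (lt_of_lt_of_le zero_lt_one hdim₂)
    obtain ⟨t, ht⟩ := exists_ne (0 : V₂)
    have hT₁ : gnorm g ((Real.sqrt (g t t))⁻¹ • t) = 1 := HTypeAux.gnorm_unit hg ht
    have himg : (fun T : V₂ => hsNorm (J T ∘ₗ J T + LinearMap.id)) '' {T : V₂ | gnorm g T = 1}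
        = {0} := by
      refine Set.eq_singleton_iff_unique_mem.mpr ⟨⟨_, hT₁, hval _ hT₁⟩, ?_⟩
      rintro x ⟨T, hT, rfl⟩
      exact hval T hT
    have hdelta0 : deltaOf g J = 0 := by
      rw [deltaOf, himg, csSup_singleton, mul_zero]
    have hmem0 : (0 : ℝ) ∈ {d : ℝ | ∃ (g : V₂ →ₗ[ℝ] V₂ →ₗ[ℝ] ℝ) (J : V₂ → V₁ →ₗ[ℝ] V₁),
        IsInnerProd g ∧ IsJOp B g J ∧ d = deltaOf g J} :=
      ⟨g, J, hg, hJ, hdelta0.symm⟩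
    have hlb : ∀ d ∈ {d : ℝ | ∃ (g : V₂ →ₗ[ℝ] V₂ →ₗ[ℝ] ℝ) (J : V₂ → V₁ →ₗ[ℝ] V₁),
        IsInnerProd g ∧ IsJOp B g J ∧ d = deltaOf g J}, 0 ≤ d := by
      rintro d ⟨g', J', _, _, rfl⟩
      refine mul_nonneg (inv_nonneg.mpr (Real.sqrt_nonneg _)) (Real.sSup_nonneg ?_)
      rintro x ⟨T, _, rfl⟩
      exact HTypeAux.hsNorm_nonneg _
    rw [htypeDeviation]
    exact le_antisymm (csInf_le ⟨0, hlb⟩ hmem0) (le_csInf ⟨0, hmem0⟩ hlb)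

end
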